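/- Define T(x) = δ₁₂ K^{-1} 1_n + δ₁₁ K^{-1} diag(α) Ã x + (δ₂₂-δ₁₁) K^{-1} diag(α) diag(x) Ã x, where K = (δ₁₂+δ₂₁) I + δ₂₂ diag(α). Under the assumptions δ_{rs}, α_i ∈ (0,1), δ₁₁+δ₁₂ = δ₂₁+δ₂₂ = 1, δ₂₂ ≥ δ₁₁, and Ã row-stochastic with zero diagonal, T maps [0,1]^n into [0,1]^n and is a contraction with respect to the ∞-norm with Lipschitz constant max_i (2δ₂₂-δ₁₁)α_i / (δ₁₂+δ₂₁+δ₂₂ α_i) < 1. Hence T has a unique fixed point p* in [0,1]^n. -/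
import Mathlib



set_option maxHeartbeats 1000000

private lemma stmt10_num_est (δ11 δ22 A M xi d e Sy : ℝ)
    (h11 : 0 ≤ δ11) (hd : 0 ≤ δ22 - δ11) (hA : 0 ≤ A) (hM : 0 ≤ M)
    (hdle : |d| ≤ M) (hxi0 : 0 ≤ xi) (hxi1 : xi ≤ 1)
    (he : |e| ≤ M) (hSy0 : 0 ≤ Sy) (hSy1 : Sy ≤ 1) :
    |δ11 * A * d + (δ22 - δ11) * A * (xi * d + e * Sy)| ≤ (2 * δ22 - δ11) * A * M := by
  have hd' := abs_le.mp hdle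
  have he' := abs_le.mp he
  have hxd : |xi * d| ≤ M := by
    rw [abs_le]
    constructor
    · nlinarith [mul_nonneg hxi0 (by linarith : (0:ℝ) ≤ M + d),
        mul_nonneg (by linarith : (0:ℝ) ≤ 1 - xi) hM]
    · nlinarith [mul_nonneg hxi0 (by linarith : (0:ℝ) ≤ M - d),
        mul_nonneg (by linarith : (0:ℝ) ≤ 1 - xi) hM]
  have heS : |e * Sy| ≤ M := by
    rw [abs_mul, abs_of_nonneg hSy0]
    calc |e| * Sy ≤ M * 1 := mul_le_mul he hSy1 hSy0 hM
      _ = M := mul_one M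
  have hxd' := abs_le.mp hxd
  have heS' := abs_le.mp heS
  have h1 : 0 ≤ δ11 * A := mul_nonneg h11 hA
  have h2 : 0 ≤ (δ22 - δ11) * A := mul_nonneg hd hA
  rw [abs_le]
  constructor
  · nlinarith [mul_nonneg h1 (by linarith : (0:ℝ) ≤ M + d),
      mul_nonneg h2 (by linarith : (0:ℝ) ≤ M + xi * d),
      mul_nonneg h2 (by linarith : (0:ℝ) ≤ M + e * Sy)]
  · nlinarith [mul_nonneg h1 (by linarith : (0:ℝ) ≤ M - d),
      mul_nonneg h2 (by linarith : (0:ℝ) ≤ M - xi * d),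
      mul_nonneg h2 (by linarith : (0:ℝ) ≤ M - e * Sy)]

/-- The auxiliary map `T` for the two-product self-social NCPM. -/
noncomputable def mapT {n : ℕ} (δ11 δ12 δ21 δ22 : ℝ) (α : Fin n → ℝ)
    (Atil : Matrix (Fin n) (Fin n) ℝ) (x : Fin n → ℝ) : Fin n → ℝ :=
  fun i => (δ12 + δ11 * α i * (∑ j, Atil i j * x j)
    + (δ22 - δ11) * α i * x i * (∑ j, Atil i j * x j)) / (δ12 + δ21 + δ22 * α i)

theorem stmt_10 (n : ℕ) (δ11 δ12 δ21 δ22 : ℝ)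
    (h11 : 0 < δ11 ∧ δ11 < 1) (h12 : 0 < δ12 ∧ δ12 < 1)
    (h21 : 0 < δ21 ∧ δ21 < 1) (h22 : 0 < δ22 ∧ δ22 < 1)
    (hrow1 : δ11 + δ12 = 1) (hrow2 : δ21 + δ22 = 1) (hord : δ11 ≤ δ22)
    (α : Fin n → ℝ) (hα : ∀ i, 0 < α i ∧ α i < 1)
    (Atil : Matrix (Fin n) (Fin n) ℝ)
    (hA0 : ∀ i j, 0 ≤ Atil i j) (hA1 : ∀ i, ∑ j, Atil i j = 1)
    (hAdiag : ∀ i, Atil i i = 0) :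
    (∀ x : Fin n → ℝ, (∀ i, 0 ≤ x i ∧ x i ≤ 1) →
      ∀ i, 0 ≤ mapT δ11 δ12 δ21 δ22 α Atil x i ∧ mapT δ11 δ12 δ21 δ22 α Atil x i ≤ 1) ∧
    (∀ x y : Fin n → ℝ, (∀ i, 0 ≤ x i ∧ x i ≤ 1) → (∀ i, 0 ≤ y i ∧ y i ≤ 1) →
      (⨆ i, |mapT δ11 δ12 δ21 δ22 α Atil x i - mapT δ11 δ12 δ21 δ22 α Atil y i|) ≤
        (⨆ i, (2 * δ22 - δ11) * α i / (δ12 + δ21 + δ22 * α i)) * ⨆ i, |x i - y i|) ∧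
    (⨆ i, (2 * δ22 - δ11) * α i / (δ12 + δ21 + δ22 * α i)) < 1 ∧
    (∃! p : Fin n → ℝ, (∀ i, 0 ≤ p i ∧ p i ≤ 1) ∧ mapT δ11 δ12 δ21 δ22 α Atil p = p) := by
  obtain ⟨h11a, h11b⟩ := h11
  obtain ⟨h12a, h12b⟩ := h12
  obtain ⟨h21a, h21b⟩ := h21
  obtain ⟨h22a, h22b⟩ := h22
  have hKpos : ∀ i, 0 < δ12 + δ21 + δ22 * α i := fun i => by
    have := (hα i).1; nlinarith
  -- the contraction coefficients
  set c : Fin n → ℝ := fun i => (2 * δ22 - δ11) * α i / (δ12 + δ21 + δ22 * α i) with hcdef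
  have hc0 : ∀ i, 0 ≤ c i := fun i =>
    div_nonneg (by nlinarith [(hα i).1.le]) (hKpos i).le
  have hc1 : ∀ i, c i < 1 := fun i => by
    rw [hcdef]
    simp only
    rw [div_lt_one (hKpos i)]
    have h1 := (hα i).1
    have h2 := (hα i).2
    nlinarith [mul_nonneg (sub_nonneg.mpr hord) (sub_nonneg.mpr h2.le)]
  have hbdd : BddAbove (Set.range c) := (Set.finite_range c).bddAbove
  -- sums bounds
  have hsum : ∀ (x : Fin n → ℝ), (∀ i, 0 ≤ x i ∧ x i ≤ 1) → ∀ i,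
      0 ≤ (∑ j, Atil i j * x j) ∧ (∑ j, Atil i j * x j) ≤ 1 := by
    intro x hx i
    constructor
    · exact Finset.sum_nonneg fun j _ => mul_nonneg (hA0 i j) (hx j).1
    · calc (∑ j, Atil i j * x j) ≤ ∑ j, Atil i j :=
            Finset.sum_le_sum fun j _ => mul_le_of_le_one_right (hA0 i j) (hx j).2
        _ = 1 := hA1 i
  -- Part 1: T maps the cube into itself
  have hmap : ∀ x : Fin n → ℝ, (∀ i, 0 ≤ x i ∧ x i ≤ 1) →
      ∀ i, 0 ≤ mapT δ11 δ12 δ21 δ22 α Atil x i ∧ mapT δ11 δ12 δ21 δ22 α Atil x i ≤ 1 := by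
    intro x hx i
    have hS := hsum x hx i
    have hα0 := (hα i).1
    have hα1 := (hα i).2
    have hxi := hx i
    have hd : (0:ℝ) ≤ δ22 - δ11 := sub_nonneg.mpr hord
    unfold mapT
    constructor
    · apply div_nonneg _ (hKpos i).le
      have t1 : 0 ≤ δ11 * α i * (∑ j, Atil i j * x j) :=
        mul_nonneg (mul_nonneg h11a.le hα0.le) hS.1
      have t2 : 0 ≤ (δ22 - δ11) * α i * x i * (∑ j, Atil i j * x j) :=
        mul_nonneg (mul_nonneg (mul_nonneg hd hα0.le) hxi.1) hS.1
      linarith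
    · rw [div_le_one (hKpos i)]
      have t1 : δ11 * α i * (∑ j, Atil i j * x j) ≤ δ11 * α i := by
        nlinarith [mul_nonneg h11a.le hα0.le]
      have hxS : x i * (∑ j, Atil i j * x j) ≤ 1 := mul_le_one₀ hxi.2 hS.1 hS.2
      have t2 : (δ22 - δ11) * α i * x i * (∑ j, Atil i j * x j) ≤ (δ22 - δ11) * α i := by
        nlinarith [mul_nonneg hd hα0.le, mul_nonneg hxi.1 hS.1]
      nlinarith
  -- key pointwise Lipschitz estimate
  have key : ∀ x y : Fin n → ℝ, (∀ i, 0 ≤ x i ∧ x i ≤ 1) → (∀ i, 0 ≤ y i ∧ y i ≤ 1) →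
      ∀ M : ℝ, 0 ≤ M → (∀ j, |x j - y j| ≤ M) →
      ∀ i, |mapT δ11 δ12 δ21 δ22 α Atil x i - mapT δ11 δ12 δ21 δ22 α Atil y i| ≤ c i * M := by
    intro x y hx hy M hM0 hM i
    have hSx := hsum x hx i
    have hSy := hsum y hy i
    have hα0 := (hα i).1
    have hd : (0:ℝ) ≤ δ22 - δ11 := sub_nonneg.mpr hord
    have hxi := hx i
    have hdiff : |(∑ j, Atil i j * x j) - (∑ j, Atil i j * y j)| ≤ M := by
      rw [← Finset.sum_sub_distrib]
      calc |∑ j, (Atil i j * x j - Atil i j * y j)|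
          ≤ ∑ j, |Atil i j * x j - Atil i j * y j| := Finset.abs_sum_le_sum_abs _ _
        _ ≤ ∑ j, Atil i j * M := by
            apply Finset.sum_le_sum
            intro j _
            rw [← mul_sub, abs_mul, abs_of_nonneg (hA0 i j)]
            exact mul_le_mul_of_nonneg_left (hM j) (hA0 i j)
        _ = M := by rw [← Finset.sum_mul, hA1 i, one_mul]
    have hexp : mapT δ11 δ12 δ21 δ22 α Atil x i - mapT δ11 δ12 δ21 δ22 α Atil y i
        = (δ11 * α i * ((∑ j, Atil i j * x j) - (∑ j, Atil i j * y j))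
          + (δ22 - δ11) * α i * (x i * ((∑ j, Atil i j * x j) - (∑ j, Atil i j * y j))
            + (x i - y i) * (∑ j, Atil i j * y j))) / (δ12 + δ21 + δ22 * α i) := by
      unfold mapT
      rw [div_sub_div_same]
      congr 1
      ring
    have hnum : |δ11 * α i * ((∑ j, Atil i j * x j) - (∑ j, Atil i j * y j))
          + (δ22 - δ11) * α i * (x i * ((∑ j, Atil i j * x j) - (∑ j, Atil i j * y j))
            + (x i - y i) * (∑ j, Atil i j * y j))| ≤ (2 * δ22 - δ11) * α i * M :=
      stmt10_num_est δ11 δ22 (α i) M (x i) _ _ _ h11a.le hd hα0.le hM0 hdiff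
        hxi.1 hxi.2 (hM i) hSy.1 hSy.2
    rw [hexp, abs_div, abs_of_pos (hKpos i)]
    have : c i * M = ((2 * δ22 - δ11) * α i * M) / (δ12 + δ21 + δ22 * α i) := by
      rw [hcdef]; ring
    rw [this]
    exact div_le_div_of_nonneg_right hnum (hKpos i).le
  -- nonnegativity of the sup of c
  have hcs0 : 0 ≤ ⨆ i, c i := by
    rcases isEmpty_or_nonempty (Fin n) with h | h
    · rw [Real.iSup_of_isEmpty]
    · exact (hc0 (Classical.arbitrary _)).trans (le_ciSup hbdd _)
  -- the sup of c is < 1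
  have hcs1 : (⨆ i, c i) < 1 := by
    rcases isEmpty_or_nonempty (Fin n) with h | h
    · rw [Real.iSup_of_isEmpty]; norm_num
    · obtain ⟨i0, hi0⟩ := Finite.exists_max c
      exact lt_of_le_of_lt (ciSup_le hi0) (hc1 i0)
  -- the Lipschitz estimate w.r.t. dist
  have keyd : ∀ x y : Fin n → ℝ, (∀ i, 0 ≤ x i ∧ x i ≤ 1) → (∀ i, 0 ≤ y i ∧ y i ≤ 1) →
      dist (mapT δ11 δ12 δ21 δ22 α Atil x) (mapT δ11 δ12 δ21 δ22 α Atil y)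
        ≤ (⨆ i, c i) * dist x y := by
    intro x y hx hy
    refine (dist_pi_le_iff (by positivity)).mpr fun i => ?_
    rw [Real.dist_eq]
    have hM : ∀ j, |x j - y j| ≤ dist x y := fun j => by
      rw [← Real.dist_eq]; exact dist_le_pi_dist x y j
    calc |mapT δ11 δ12 δ21 δ22 α Atil x i - mapT δ11 δ12 δ21 δ22 α Atil y i|
        ≤ c i * dist x y := key x y hx hy (dist x y) dist_nonneg hM i
      _ ≤ (⨆ i, c i) * dist x y := mul_le_mul_of_nonneg_right (le_ciSup hbdd i) dist_nonneg
  refine ⟨hmap, ?_, hcs1, ?_⟩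
  · -- contraction in sup form
    intro x y hx hy
    rcases isEmpty_or_nonempty (Fin n) with h | h
    · rw [Real.iSup_of_isEmpty]
      rw [Real.iSup_of_isEmpty, Real.iSup_of_isEmpty, mul_zero]
    · have hMbdd : BddAbove (Set.range fun j => |x j - y j|) :=
        (Set.finite_range _).bddAbove
      have hM : ∀ j, |x j - y j| ≤ ⨆ j, |x j - y j| := fun j => le_ciSup hMbdd j
      have hM0 : 0 ≤ ⨆ j, |x j - y j| :=
        (abs_nonneg _).trans (hM (Classical.arbitrary _))
      apply ciSup_le
      intro i
      calc |mapT δ11 δ12 δ21 δ22 α Atil x i - mapT δ11 δ12 δ21 δ22 α Atil y i|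
          ≤ c i * ⨆ j, |x j - y j| := key x y hx hy _ hM0 hM i
        _ ≤ (⨆ i, c i) * ⨆ j, |x j - y j| :=
            mul_le_mul_of_nonneg_right (le_ciSup hbdd i) hM0
  · -- fixed point
    set s : Set (Fin n → ℝ) := Set.Icc 0 1 with hsdef
    have hmem : ∀ x : Fin n → ℝ, x ∈ s ↔ ∀ i, 0 ≤ x i ∧ x i ≤ 1 := by
      intro x
      simp only [hsdef, Set.mem_Icc, Pi.le_def, Pi.zero_apply, Pi.one_apply, ← forall_and]
    have hclosed : IsClosed s := isClosed_Icc
    haveI : CompleteSpace s := hclosed.completeSpace_coe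
    haveI : Nonempty s := ⟨⟨0, Set.mem_Icc.mpr ⟨le_rfl, zero_le_one⟩⟩⟩
    set F : s → s := fun x =>
      ⟨mapT δ11 δ12 δ21 δ22 α Atil x.1, (hmem _).mpr (hmap x.1 ((hmem x.1).mp x.2))⟩ with hFdef
    set q : NNReal := ⟨⨆ i, c i, hcs0⟩ with hqdef
    have hLip : LipschitzWith q F := by
      apply LipschitzWith.of_dist_le_mul
      intro x y
      rw [Subtype.dist_eq, Subtype.dist_eq]
      exact keyd x.1 y.1 ((hmem x.1).mp x.2) ((hmem y.1).mp y.2)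
    have hq1 : q < 1 := by
      rw [← NNReal.coe_lt_coe, NNReal.coe_one]
      exact hcs1
    have hC : ContractingWith q F := ⟨hq1, hLip⟩
    set p : s := ContractingWith.fixedPoint F hC with hpdef
    have hpfix : F p = p := hC.fixedPoint_isFixedPt
    have hpfix' : mapT δ11 δ12 δ21 δ22 α Atil p.1 = p.1 := congrArg Subtype.val hpfix
    refine ⟨p.1, ⟨(hmem p.1).mp p.2, hpfix'⟩, ?_⟩
    intro z ⟨hzc, hzf⟩
    have hbound : dist z p.1 ≤ (⨆ i, c i) * dist z p.1 := by
      have := keyd z p.1 hzc ((hmem p.1).mp p.2)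
      rwa [hzf, hpfix'] at this
    have hdz : dist z p.1 = 0 := by
      nlinarith [dist_nonneg (x := z) (y := p.1)]
    exact eq_of_dist_eq_zero hdz
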